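/- Let f : ℝ^d → ℝ be differentiable, let r > 0 and y ∈ ℝ^d. Assume the gradient of f is C_L-Lipschitz continuous on the ball B_r(y) and that f attains its infimum over B_r(y) at y. Then for all x in B_{r/2}(y), one has |∇f(x)|² ≤ 2 C_L (f(x) − f(y)). -/

import Mathlib

open Metric

/-- fderiv applied to a vector equals inner product with the gradient. -/
lemma fderiv_apply_eq_inner_gradient {d : ℕ} (f : EuclideanSpace ℝ (Fin d) → ℝ)
    (hf : Differentiable ℝ f) (p v : EuclideanSpace ℝ (Fin d)) :
    fderiv ℝ f p v = inner ℝ (gradient f p) v := by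
  have h := (hf p).hasGradientAt.hasFDerivAt
  rw [h.fderiv]
  exact InnerProductSpace.toDual_apply_apply ..

/-- Descent lemma: quadratic upper bound from Lipschitz gradient on a convex set. -/
lemma descent_lemma {d : ℕ} (f : EuclideanSpace ℝ (Fin d) → ℝ)
    (hf : Differentiable ℝ f) (C : NNReal) {s : Set (EuclideanSpace ℝ (Fin d))}
    (hs : Convex ℝ s) (hLip : LipschitzOnWith C (gradient f) s)
    {a b : EuclideanSpace ℝ (Fin d)} (ha : a ∈ s) (hb : b ∈ s) :
    f b ≤ f a + inner ℝ (gradient f a) (b - a) + (C : ℝ) / 2 * ‖b - a‖ ^ 2 := by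
  set v := b - a with hv
  -- the auxiliary function
  set F : ℝ → ℝ := fun t =>
    f (a + t • v) - t * inner ℝ (gradient f a) v - (C : ℝ) / 2 * t ^ 2 * ‖v‖ ^ 2 with hF
  have hmem : ∀ t ∈ Set.Icc (0 : ℝ) 1, a + t • v ∈ s := by
    intro t ht
    have : a + t • v = (1 - t) • a + t • b := by
      rw [hv]; module
    rw [this]
    exact hs ha hb (by linarith [ht.1, ht.2]) ht.1 (by ring)
  have hderiv : ∀ t : ℝ, HasDerivAt F
      ((inner ℝ (gradient f (a + t • v)) v : ℝ) - inner ℝ (gradient f a) v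
        - (C : ℝ) * t * ‖v‖ ^ 2) t := by
    intro t
    have hcurve : HasDerivAt (fun t : ℝ => a + t • v) v t := by
      simpa using ((hasDerivAt_id t).smul_const v).const_add a
    have h1 : HasDerivAt (fun t : ℝ => f (a + t • v))
        ((fderiv ℝ f (a + t • v)) v) t :=
      (hf (a + t • v)).hasFDerivAt.comp_hasDerivAt t hcurve
    rw [fderiv_apply_eq_inner_gradient f hf] at h1
    have h2 : HasDerivAt (fun t : ℝ => t * (inner ℝ (gradient f a) v : ℝ))
        (inner ℝ (gradient f a) v) t := by
      simpa using (hasDerivAt_id t).mul_const (inner ℝ (gradient f a) v : ℝ)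
    have h3 : HasDerivAt (fun t : ℝ => (C : ℝ) / 2 * t ^ 2 * ‖v‖ ^ 2)
        ((C : ℝ) * t * ‖v‖ ^ 2) t := by
      have := ((hasDerivAt_pow 2 t).const_mul ((C : ℝ) / 2)).mul_const (‖v‖ ^ 2)
      exact this.congr_deriv (by ring)
    exact (h1.sub h2).sub h3
  -- F is antitone on [0,1]
  have hanti : AntitoneOn F (Set.Icc (0 : ℝ) 1) := by
    apply antitoneOn_of_deriv_nonpos (convex_Icc 0 1)
    · exact fun t _ => (hderiv t).differentiableAt.continuousAt.continuousWithinAt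
    · intro t _
      exact (hderiv t).differentiableAt.differentiableWithinAt
    · intro t ht
      rw [interior_Icc] at ht
      rw [(hderiv t).deriv]
      have hts : a + t • v ∈ s := hmem t ⟨le_of_lt ht.1, le_of_lt ht.2⟩
      have hlip' : ‖gradient f (a + t • v) - gradient f a‖ ≤ (C : ℝ) * (t * ‖v‖) := by
        have := hLip.norm_sub_le hts (hmem 0 (by norm_num))
        simp only [zero_smul, add_zero] at this
        calc ‖gradient f (a + t • v) - gradient f a‖
            ≤ (C : ℝ) * ‖(a + t • v) - a‖ := by simpa using this
          _ = (C : ℝ) * (t * ‖v‖) := by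
              rw [add_sub_cancel_left, norm_smul, Real.norm_eq_abs,
                abs_of_nonneg (le_of_lt ht.1)]
    -- now bound the inner product
      have key : (inner ℝ (gradient f (a + t • v)) v : ℝ) - inner ℝ (gradient f a) v
          ≤ (C : ℝ) * t * ‖v‖ ^ 2 := by
        have h1 : (inner ℝ (gradient f (a + t • v)) v : ℝ) - inner ℝ (gradient f a) v
            = inner ℝ (gradient f (a + t • v) - gradient f a) v := by
          rw [inner_sub_left]
        rw [h1]
        calc (inner ℝ (gradient f (a + t • v) - gradient f a) v : ℝ)
            ≤ ‖gradient f (a + t • v) - gradient f a‖ * ‖v‖ :=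
              real_inner_le_norm _ _
          _ ≤ (C : ℝ) * (t * ‖v‖) * ‖v‖ :=
              mul_le_mul_of_nonneg_right hlip' (norm_nonneg _)
          _ = (C : ℝ) * t * ‖v‖ ^ 2 := by ring
      linarith
  have h01 := hanti (Set.left_mem_Icc.mpr zero_le_one) (Set.right_mem_Icc.mpr zero_le_one)
    zero_le_one
  simp only [hF, zero_smul, add_zero, zero_mul, one_smul, one_mul, one_pow,
    sub_zero, mul_one, add_sub_cancel] at h01
  have hb' : a + v = b := by rw [hv]; abel
  rw [hb'] at h01
  nlinarith [h01]

theorem inverse_PL_inequality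
    {d : ℕ} (f : EuclideanSpace ℝ (Fin d) → ℝ) (hf : Differentiable ℝ f)
    (C_L : NNReal) (r : ℝ) (hr : 0 < r) (y : EuclideanSpace ℝ (Fin d))
    (hLip : LipschitzOnWith C_L (gradient f) (ball y r))
    (hmin : ∀ x ∈ ball y r, f y ≤ f x) :
    ∀ x ∈ ball y (r / 2), ‖gradient f x‖ ^ 2 ≤ 2 * (C_L : ℝ) * (f x - f y) := by
  intro x hx
  -- y is a local min, so gradient f y = 0
  have hy0 : gradient f y = 0 := by
    have hloc : IsLocalMin f y := by
      have : ball y r ∈ nhds y := ball_mem_nhds y hr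
      exact Filter.eventually_of_mem this hmin
    have := hloc.fderiv_eq_zero
    unfold gradient
    rw [this, map_zero]
  have hxr : x ∈ ball y r := by
    apply ball_subset_ball (by linarith) hx
  have hxy : dist x y < r / 2 := mem_ball.mp hx
  -- bound on the gradient at x
  have hgx : ‖gradient f x‖ ≤ (C_L : ℝ) * dist x y := by
    have := hLip.norm_sub_le hxr (mem_ball_self hr)
    rw [hy0, sub_zero] at this
    simpa [dist_eq_norm] using this
  rcases eq_or_lt_of_le (C_L.coe_nonneg) with hC0 | hCpos
  · -- C_L = 0 case
    have : ‖gradient f x‖ ≤ 0 := by rw [← hC0] at hgx; simpa using hgx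
    have hg0 : ‖gradient f x‖ = 0 := le_antisymm this (norm_nonneg _)
    rw [hg0, ← hC0]
    norm_num
  · -- main case
    set g := gradient f x with hg
    set b := x - ((C_L : ℝ)⁻¹) • g with hbdef
    have hgb : ‖g‖ < (C_L : ℝ) * (r / 2) := by
      calc ‖g‖ ≤ (C_L : ℝ) * dist x y := hgx
        _ < (C_L : ℝ) * (r / 2) := by
            exact mul_lt_mul_of_pos_left hxy hCpos
    have hbr : b ∈ ball y r := by
      rw [mem_ball, dist_eq_norm, hbdef]
      calc ‖x - (C_L : ℝ)⁻¹ • g - y‖ ≤ ‖x - y‖ + ‖(C_L : ℝ)⁻¹ • g‖ := by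
            have : x - (C_L : ℝ)⁻¹ • g - y = (x - y) + (-((C_L : ℝ)⁻¹ • g)) := by abel
            rw [this]
            simpa using norm_add_le (x - y) (-((C_L : ℝ)⁻¹ • g))
        _ < r / 2 + r / 2 := by
            apply add_lt_add
            · rw [← dist_eq_norm]; exact hxy
            · rw [norm_smul, Real.norm_eq_abs, abs_of_nonneg (by positivity)]
              rw [inv_mul_lt_iff₀ hCpos]
              calc ‖g‖ < (C_L : ℝ) * (r / 2) := hgb
                _ = (C_L : ℝ) * (r / 2) := rfl
        _ = r := by ring
    -- apply descent lemma
    have hdesc := descent_lemma f hf C_L (convex_ball y r) hLip hxr hbr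
    have hbx : b - x = -((C_L : ℝ)⁻¹ • g) := by rw [hbdef]; abel
    have hinner : (inner ℝ g (b - x) : ℝ) = -(C_L : ℝ)⁻¹ * ‖g‖ ^ 2 := by
      rw [hbx, inner_neg_right, real_inner_smul_right, real_inner_self_eq_norm_sq]
      ring
    have hnorm : ‖b - x‖ ^ 2 = ((C_L : ℝ)⁻¹) ^ 2 * ‖g‖ ^ 2 := by
      rw [hbx, norm_neg, norm_smul, Real.norm_eq_abs, abs_of_nonneg (by positivity)]
      ring
    rw [hinner, hnorm] at hdesc
    have hfyb : f y ≤ f b := hmin b hbr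
    have hCne : (C_L : ℝ) ≠ 0 := ne_of_gt hCpos
    have : f y ≤ f x - (C_L : ℝ)⁻¹ / 2 * ‖g‖ ^ 2 := by
      calc f y ≤ f b := hfyb
        _ ≤ f x + (-(C_L : ℝ)⁻¹ * ‖g‖ ^ 2) + (C_L : ℝ) / 2 * (((C_L : ℝ)⁻¹) ^ 2 * ‖g‖ ^ 2) :=
            hdesc
        _ = f x - (C_L : ℝ)⁻¹ / 2 * ‖g‖ ^ 2 := by
            field_simp
            ring
    have h2 : (C_L : ℝ)⁻¹ / 2 * ‖g‖ ^ 2 ≤ f x - f y := by linarith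
    calc ‖g‖ ^ 2 = 2 * (C_L : ℝ) * ((C_L : ℝ)⁻¹ / 2 * ‖g‖ ^ 2) := by
          field_simp
      _ ≤ 2 * (C_L : ℝ) * (f x - f y) := by
          apply mul_le_mul_of_nonneg_left h2 (by positivity)
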